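/- For all integers n, k ≥ 1, the number of flattened Catalan words of length n with exactly k runs of weak descents equals the number of flattened Catalan words of length n with exactly k runs of ascents. -/

import Mathlib

/-- `w : ℕ → ℕ` encodes a Catalan word of length `n` (0-indexed letters
`w 0, w 1, …, w (n-1)`): the first letter is `0`, each letter is at most the
previous one plus one, and `w` is normalized to vanish at positions `≥ n`. -/
def IsCatalanWord (n : ℕ) (w : ℕ → ℕ) : Prop :=
  w 0 = 0 ∧ (∀ i, i + 1 < n → w (i + 1) ≤ w i + 1) ∧ ∀ i, n ≤ i → w i = 0

/-- `j` is the starting position of one of the maximal weakly increasing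
contiguous subwords (runs of weak ascents) of the length-`n` word `w`. -/
def IsRunStart (n : ℕ) (w : ℕ → ℕ) (j : ℕ) : Prop :=
  j < n ∧ (j = 0 ∨ w j < w (j - 1))

/-- A word is flattened when the leading terms of its maximal weakly increasing
contiguous subwords, read from left to right, form a weakly increasing sequence. -/
def IsFlattened (n : ℕ) (w : ℕ → ℕ) : Prop :=
  ∀ i j, IsRunStart n w i → IsRunStart n w j → i ≤ j → w i ≤ w j

/-- The set of flattened Catalan words of length `n`. -/
def FlatCat (n : ℕ) : Set (ℕ → ℕ) := {w | IsCatalanWord n w ∧ IsFlattened n w}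

/-- Number of maximal strictly increasing contiguous subwords (runs of ascents):
`1 + #{ i : w_i ≥ w_{i+1} }`. -/
noncomputable def runsAsc (n : ℕ) (w : ℕ → ℕ) : ℕ :=
  1 + {i : ℕ | i + 1 < n ∧ w (i + 1) ≤ w i}.ncard

/-- Number of maximal weakly increasing contiguous subwords (runs of weak
ascents): `1 + #{ i : w_i > w_{i+1} }`. -/
noncomputable def wruns (n : ℕ) (w : ℕ → ℕ) : ℕ :=
  1 + {i : ℕ | i + 1 < n ∧ w (i + 1) < w i}.ncard

/-- Number of maximal strictly decreasing contiguous subwords (runs of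
descents): `1 + #{ i : w_i ≤ w_{i+1} }`. -/
noncomputable def runsDesc (n : ℕ) (w : ℕ → ℕ) : ℕ :=
  1 + {i : ℕ | i + 1 < n ∧ w i ≤ w (i + 1)}.ncard

/-- Number of maximal weakly decreasing contiguous subwords (runs of weak
descents): `1 + #{ i : w_i < w_{i+1} }`. -/
noncomputable def wrunsDesc (n : ℕ) (w : ℕ → ℕ) : ℕ :=
  1 + {i : ℕ | i + 1 < n ∧ w i < w (i + 1)}.ncard

/-- An `ℓ`-valley `a b^ℓ (b+1)` (with `a > b`) occurring at position `i` of the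
length-`n` word `w`. -/
def IsLValley (n : ℕ) (w : ℕ → ℕ) (ℓ i : ℕ) : Prop :=
  i + ℓ + 1 < n ∧ w (i + 1) < w i ∧ (∀ t, 1 ≤ t → t ≤ ℓ → w (i + t) = w (i + 1)) ∧
    w (i + ℓ + 1) = w (i + 1) + 1

/-- Number of `ℓ`-valleys of `w`. -/
noncomputable def lValleyCount (n : ℕ) (w : ℕ → ℕ) (ℓ : ℕ) : ℕ :=
  {i : ℕ | IsLValley n w ℓ i}.ncard

/-- Number of valleys of `w` (all `ℓ`-valleys, `ℓ ≥ 1`). -/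
noncomputable def valleyCount (n : ℕ) (w : ℕ → ℕ) : ℕ :=
  {p : ℕ × ℕ | 1 ≤ p.2 ∧ IsLValley n w p.2 p.1}.ncard

/-- A symmetric valley `a (a-1)^ℓ a` (with `ℓ ≥ 1`) occurring at position `i`. -/
def IsSymValley (n : ℕ) (w : ℕ → ℕ) (ℓ i : ℕ) : Prop :=
  i + ℓ + 1 < n ∧ w i = w (i + 1) + 1 ∧ (∀ t, 1 ≤ t → t ≤ ℓ → w (i + t) = w (i + 1)) ∧
    w (i + ℓ + 1) = w i

/-- Number of symmetric valleys of `w` (over all `ℓ ≥ 1`). -/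
noncomputable def symValleyCount (n : ℕ) (w : ℕ → ℕ) : ℕ :=
  {p : ℕ × ℕ | 1 ≤ p.2 ∧ IsSymValley n w p.2 p.1}.ncard

/-- An `ℓ`-peak `a (a+1)^ℓ b` (with `a ≥ b`) occurring at position `i` of the
length-`n` word `w`. -/
def IsLPeak (n : ℕ) (w : ℕ → ℕ) (ℓ i : ℕ) : Prop :=
  i + ℓ + 1 < n ∧ (∀ t, 1 ≤ t → t ≤ ℓ → w (i + t) = w i + 1) ∧ w (i + ℓ + 1) ≤ w i

/-- Number of `ℓ`-peaks of `w`. -/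
noncomputable def lPeakCount (n : ℕ) (w : ℕ → ℕ) (ℓ : ℕ) : ℕ :=
  {i : ℕ | IsLPeak n w ℓ i}.ncard

/-- Number of peaks of `w` (all `ℓ`-peaks, `ℓ ≥ 1`). -/
noncomputable def peakCount (n : ℕ) (w : ℕ → ℕ) : ℕ :=
  {p : ℕ × ℕ | 1 ≤ p.2 ∧ IsLPeak n w p.2 p.1}.ncard

/-- A symmetric peak `a (a+1)^ℓ a` (with `ℓ ≥ 1`) occurring at position `i`. -/
def IsSymPeak (n : ℕ) (w : ℕ → ℕ) (ℓ i : ℕ) : Prop :=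
  i + ℓ + 1 < n ∧ (∀ t, 1 ≤ t → t ≤ ℓ → w (i + t) = w i + 1) ∧ w (i + ℓ + 1) = w i

/-- Number of symmetric peaks of `w` (over all `ℓ ≥ 1`). -/
noncomputable def symPeakCount (n : ℕ) (w : ℕ → ℕ) : ℕ :=
  {p : ℕ × ℕ | 1 ≤ p.2 ∧ IsSymPeak n w p.2 p.1}.ncard

section FC
variable {n : ℕ} {w : ℕ → ℕ}

theorem cat_le_idx (hw : IsCatalanWord n w) : ∀ i, i < n → w i ≤ i := by
  intro i
  induction i with
  | zero => intro _; simp [hw.1]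
  | succ m ih => intro h; have := hw.2.1 m h; have := ih (by omega); omega

theorem cat_drift (hw : IsCatalanWord n w) : ∀ i j, i ≤ j → j < n → w j ≤ w i + (j - i) := by
  intro i j hij hj
  induction j with
  | zero => have : i = 0 := by omega
            subst this; simp
  | succ m ih =>
    rcases Nat.eq_or_lt_of_le hij with h | h
    · subst h; simp
    · have h1 := hw.2.1 m hj
      have h2 := ih (by omega) (by omega)
      omega

theorem cat_ivt (hw : IsCatalanWord n w) : ∀ m, m < n → ∀ c, c ≤ w m → ∃ i, i ≤ m ∧ w i = c := by
  intro m
  induction m with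
  | zero => intro _ c hc; have := hw.1; exact ⟨0, le_rfl, by omega⟩
  | succ m ih =>
    intro h c hc
    by_cases h2 : c ≤ w m
    · obtain ⟨i, hi, hwi⟩ := ih (by omega) c h2
      exact ⟨i, by omega, hwi⟩
    · have := hw.2.1 m h
      exact ⟨m + 1, le_rfl, by omega⟩
end FC

open Classical in
/-- Length of the first maximal weakly increasing run. -/
noncomputable def runLen (n : ℕ) (w : ℕ → ℕ) : ℕ :=
  Nat.find (p := fun j => 1 ≤ j ∧ (n ≤ j ∨ w j < w (j-1)))
    ⟨max 1 n, le_max_left _ _, Or.inl (le_max_right _ _)⟩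

theorem runLen_pos (n : ℕ) (w : ℕ → ℕ) : 1 ≤ runLen n w := by
  classical
  exact (Nat.find_spec (p := fun j => 1 ≤ j ∧ (n ≤ j ∨ w j < w (j-1))) _).1

theorem runLen_le (n : ℕ) (w : ℕ → ℕ) (hn : 1 ≤ n) : runLen n w ≤ n := by
  classical
  exact Nat.find_le ⟨hn, Or.inl le_rfl⟩

theorem runLen_bound (n : ℕ) (w : ℕ → ℕ) :
    n ≤ runLen n w ∨ w (runLen n w) < w (runLen n w - 1) := by
  classical
  exact (Nat.find_spec (p := fun j => 1 ≤ j ∧ (n ≤ j ∨ w j < w (j-1))) _).2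

theorem runLen_min (n : ℕ) (w : ℕ → ℕ) {j : ℕ} (h1 : 1 ≤ j) (h2 : j < runLen n w) :
    j < n ∧ w (j-1) ≤ w j := by
  classical
  have := Nat.find_min (p := fun j => 1 ≤ j ∧ (n ≤ j ∨ w j < w (j-1)))
    (H := ⟨max 1 n, le_max_left _ _, Or.inl (le_max_right _ _)⟩) h2
  refine ⟨by omega, ?_⟩
  by_contra hb
  exact this ⟨h1, Or.inr (lt_of_not_ge hb)⟩

open Classical in
noncomputable def PhiF : (n : ℕ) → (ℕ → ℕ) → ℕ → ℕ
  | n, w =>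
    if hn : n = 0 then fun _ => 0
    else
      let L := runLen n w
      if hL : n ≤ L then (fun i => if i < n then i - w i else 0)
      else
        let d := w L
        let s := ((Finset.range L).filter (fun i => w i = d)).sup id
        let v : ℕ → ℕ := fun i => if i < n - L then w (i + L) - d else 0
        have : n - L < n := by
          have := runLen_pos n w
          omega
        let v' := PhiF (n - L) v
        fun i => if i < L then i - w i + (if s < i then 1 else 0)
                 else if i < n then v' (i - L) + (s - d) else 0
termination_by n => n

theorem PhiF_norm (n : ℕ) (w : ℕ → ℕ) (i : ℕ) (h : n ≤ i) : PhiF n w i = 0 := by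
  rw [PhiF]
  split
  · rfl
  · dsimp only
    split
    · simp only [if_neg (show ¬ i < n by omega)]
    · simp only [if_neg (show ¬ i < runLen n w from fun hc => by
        have := runLen_le n w (by omega); omega), if_neg (show ¬ i < n by omega)]

/-- Position of the last letter equal to the landing value in the first run. -/
noncomputable def sPos (n : ℕ) (w : ℕ → ℕ) : ℕ :=
  ((Finset.range (runLen n w)).filter (fun i => w i = w (runLen n w))).sup id

/-- The suffix word after the first run, shifted down by the landing value. -/
noncomputable def sfx (n : ℕ) (w : ℕ → ℕ) : ℕ → ℕ :=
  fun i => if i < n - runLen n w then w (i + runLen n w) - w (runLen n w) else 0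

theorem PhiF_single (n : ℕ) (w : ℕ → ℕ) (hn : 1 ≤ n) (hL : n ≤ runLen n w) :
    PhiF n w = fun i => if i < n then i - w i else 0 := by
  rw [PhiF]
  rw [dif_neg (by omega)]
  dsimp only
  rw [dif_pos hL]

theorem PhiF_block (n : ℕ) (w : ℕ → ℕ) (hn : 1 ≤ n) (hL : runLen n w < n) :
    PhiF n w = fun i =>
      if i < runLen n w then i - w i + (if sPos n w < i then 1 else 0)
      else if i < n then
        PhiF (n - runLen n w) (sfx n w) (i - runLen n w) + (sPos n w - w (runLen n w))
      else 0 := by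
  rw [PhiF]
  rw [dif_neg (by omega)]
  dsimp only
  rw [dif_neg (by omega)]
  rfl

section Run
variable {n : ℕ} {w : ℕ → ℕ}

theorem run_mono (i j : ℕ) (hij : i ≤ j) (hj : j < runLen n w) : w i ≤ w j := by
  induction j with
  | zero => have : i = 0 := by omega
            subst this; simp
  | succ m ih =>
    rcases Nat.eq_or_lt_of_le hij with h | h
    · subst h; simp
    · have h2 := (runLen_min n w (j := m + 1) (by omega) hj).2
      simp at h2
      have := ih (by omega) (by omega)
      omega

theorem run_step (hw : IsCatalanWord n w) (hn : 1 ≤ n) (i : ℕ) (hi : i + 1 < runLen n w) :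
    w (i + 1) = w i ∨ w (i + 1) = w i + 1 := by
  have h1 := hw.2.1 i (by have := runLen_le n w hn; omega)
  have h2 := run_mono (n := n) (w := w) i (i + 1) (by omega) hi
  omega

theorem run_count (hw : IsCatalanWord n w) (hn : 1 ≤ n) :
    ∀ m, m < runLen n w →
      w m = ((Finset.range m).filter fun i => w i < w (i + 1)).card := by
  classical
  intro m
  induction m with
  | zero => intro _; simpa using hw.1
  | succ m ih =>
    intro h
    rw [Finset.range_add_one, Finset.filter_insert]
    rcases run_step hw hn m h with h2 | h2
    · rw [if_neg (by omega), ← ih (by omega)]; omega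
    · rw [if_pos (by omega), Finset.card_insert_of_notMem (by simp)]
      rw [← ih (by omega)]; omega

theorem suffix_ge (hw : IsCatalanWord n w) (hf : IsFlattened n w) (hL : runLen n w < n) :
    ∀ i, runLen n w ≤ i → i < n → w (runLen n w) ≤ w i := by
  have hstart : IsRunStart n w (runLen n w) := by
    refine ⟨hL, Or.inr ?_⟩
    rcases runLen_bound n w with h | h
    · omega
    · exact h
  intro i
  induction i with
  | zero => intro h1 _; have := runLen_pos n w; omega
  | succ m ih =>
    intro h1 h2
    rcases Nat.eq_or_lt_of_le h1 with h | h
    · exact le_of_eq (by rw [h])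
    · by_cases h3 : w (m + 1) < w m
      · exact hf _ _ hstart ⟨h2, Or.inr (by simpa using h3)⟩ (by omega)
      · have := ih (by omega) (by omega)
        omega
end Run

section SFacts
variable {n : ℕ} {w : ℕ → ℕ}

theorem desc_at (hn : 1 ≤ n) (hL : runLen n w < n) :
    w (runLen n w) < w (runLen n w - 1) :=
  (runLen_bound n w).resolve_left (by omega)

theorem sPos_spec (hw : IsCatalanWord n w) (hn : 1 ≤ n) (hL : runLen n w < n) :
    sPos n w < runLen n w ∧ w (sPos n w) = w (runLen n w) ∧
      (∀ i, i < runLen n w → w i = w (runLen n w) → i ≤ sPos n w) := by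
  classical
  have hdesc := desc_at (w := w) hn hL
  have hL1 : runLen n w - 1 < n := by omega
  obtain ⟨i, hi, hwi⟩ := cat_ivt hw (runLen n w - 1) hL1 (w (runLen n w)) (le_of_lt hdesc)
  have hne : ((Finset.range (runLen n w)).filter (fun i => w i = w (runLen n w))).Nonempty := by
    refine ⟨i, ?_⟩
    simp only [Finset.mem_filter, Finset.mem_range]
    have := runLen_pos n w
    exact ⟨by omega, hwi⟩
  obtain ⟨b, hb, hbeq⟩ := Finset.exists_mem_eq_sup _ hne id
  simp only [Finset.mem_filter, Finset.mem_range] at hb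
  have hmem : sPos n w = b := hbeq
  constructor
  · rw [hmem]; exact hb.1
  constructor
  · rw [hmem]; exact hb.2
  · intro j hj hwj
    exact Finset.le_sup (f := id) (by simp only [Finset.mem_filter, Finset.mem_range]; exact ⟨hj, hwj⟩)

theorem sPos_succ (hw : IsCatalanWord n w) (hn : 1 ≤ n) (hL : runLen n w < n) :
    sPos n w + 1 < runLen n w ∧ w (sPos n w + 1) = w (runLen n w) + 1 := by
  obtain ⟨hs1, hs2, hs3⟩ := sPos_spec hw hn hL
  have hdesc := desc_at (w := w) hn hL
  have hP := runLen_pos n w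
  have hne : sPos n w ≠ runLen n w - 1 := by
    intro h; rw [h] at hs2; omega
  have hlt : sPos n w + 1 < runLen n w := by omega
  refine ⟨hlt, ?_⟩
  have h1 := run_mono (n := n) (w := w) (sPos n w) (sPos n w + 1) (by omega) hlt
  have h2 := hw.2.1 (sPos n w) (by have := runLen_le n w hn; omega)
  have h3 : w (sPos n w + 1) ≠ w (runLen n w) := fun h => by
    have := hs3 (sPos n w + 1) hlt h; omega
  omega

/-- For positions in the first run, being after `sPos` is the same as exceeding `d`. -/
theorem sPos_lt_char (hw : IsCatalanWord n w) (hn : 1 ≤ n) (hL : runLen n w < n) :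
    ∀ i, i < runLen n w → (sPos n w < i ↔ w (runLen n w) < w i) := by
  obtain ⟨hs1, hs2, hs3⟩ := sPos_spec hw hn hL
  obtain ⟨hq1, hq2⟩ := sPos_succ hw hn hL
  intro i hi
  constructor
  · intro h
    have := run_mono (n := n) (w := w) (sPos n w + 1) i (by omega) hi
    omega
  · intro h
    by_contra hc
    have := run_mono (n := n) (w := w) i (sPos n w) (by omega) hs1
    omega

theorem sPos_bounds (hw : IsCatalanWord n w) (hn : 1 ≤ n) (hL : runLen n w < n) :
    w (runLen n w) ≤ sPos n w ∧
      sPos n w + w (runLen n w - 1) + 1 ≤ runLen n w + w (runLen n w) := by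
  obtain ⟨hs1, hs2, hs3⟩ := sPos_spec hw hn hL
  obtain ⟨hq1, hq2⟩ := sPos_succ hw hn hL
  have hb1 : w (sPos n w) ≤ sPos n w := cat_le_idx hw _ (by omega)
  have hb2 := cat_drift hw (sPos n w + 1) (runLen n w - 1) (by omega) (by omega)
  omega
end SFacts

section Sfx
variable {n : ℕ} {w : ℕ → ℕ}

theorem sfx_runstart (hw : IsCatalanWord n w) (hf : IsFlattened n w) (hn : 1 ≤ n)
    (hL : runLen n w < n) (i : ℕ) (hi : 1 ≤ i) :
    IsRunStart (n - runLen n w) (sfx n w) i ↔ IsRunStart n w (i + runLen n w) := by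
  have hged := suffix_ge hw hf hL
  constructor
  · rintro ⟨h1, h2⟩
    rcases h2 with h2 | h2
    · omega
    · refine ⟨by omega, Or.inr ?_⟩
      unfold sfx at h2
      rw [if_pos h1, if_pos (by omega)] at h2
      have e1 : i - 1 + runLen n w = i + runLen n w - 1 := by omega
      rw [e1] at h2
      have g1 := hged (i + runLen n w - 1) (by omega) (by omega)
      omega
  · rintro ⟨h1, h2⟩
    rcases h2 with h2 | h2
    · omega
    · refine ⟨by omega, Or.inr ?_⟩
      unfold sfx
      rw [if_pos (by omega), if_pos (by omega)]
      have e1 : i - 1 + runLen n w = i + runLen n w - 1 := by omega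
      rw [e1]
      have g1 := hged (i + runLen n w - 1) (by omega) (by omega)
      have g2 := hged (i + runLen n w) (by omega) h1
      omega

theorem sfx_mem (hw : IsCatalanWord n w) (hf : IsFlattened n w) (hn : 1 ≤ n)
    (hL : runLen n w < n) : sfx n w ∈ FlatCat (n - runLen n w) := by
  have hged := suffix_ge hw hf hL
  refine ⟨⟨?_, ?_, ?_⟩, ?_⟩
  · unfold sfx
    rw [if_pos (by omega)]
    simp
  · intro i hi
    unfold sfx
    rw [if_pos (by omega), if_pos (by omega)]
    have e1 : i + 1 + runLen n w = (i + runLen n w) + 1 := by omega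
    rw [e1]
    have g1 := hged (i + runLen n w) (by omega) (by omega)
    have g2 := hw.2.1 (i + runLen n w) (by omega)
    omega
  · intro i hi
    unfold sfx
    rw [if_neg (by omega)]
  · intro i j hi hj hij
    rcases Nat.eq_zero_or_pos i with h0 | h0
    · subst h0
      unfold sfx
      rw [if_pos (by have := hi.1; omega)]
      simp
    · have hi' := (sfx_runstart hw hf hn hL i h0).1 hi
      have hj' := (sfx_runstart hw hf hn hL j (by omega)).1 hj
      have := hf _ _ hi' hj' (by omega)
      unfold sfx
      rw [if_pos (by have := hi.1; omega), if_pos (by have := hj.1; omega)]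
      have g1 := hged (i + runLen n w) (by omega) (by have := hi.1; omega)
      omega
end Sfx

section Helpers
variable {n : ℕ} {w : ℕ → ℕ}

theorem runLen_eq_desc {K : ℕ} (h1 : 1 ≤ K) (h2 : K < n) (h3 : w K < w (K-1))
    (h4 : ∀ j, 1 ≤ j → j < K → w (j-1) ≤ w j) : runLen n w = K := by
  classical
  have h5 : runLen n w ≤ K := Nat.find_le ⟨h1, Or.inr h3⟩
  by_contra hc
  have hc' : runLen n w < K := by omega
  rcases runLen_bound n w with q | q
  · omega
  · have := h4 (runLen n w) (runLen_pos n w) hc'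
    omega

theorem runLen_eq_full (hn : 1 ≤ n)
    (h4 : ∀ j, 1 ≤ j → j < n → w (j-1) ≤ w j) : runLen n w = n := by
  refine le_antisymm (runLen_le n w hn) ?_
  by_contra hc
  push_neg at hc
  have h3 := desc_at hn hc
  have := h4 (runLen n w) (runLen_pos n w) hc
  omega

theorem card_shift (L N : ℕ) (P : ℕ → Prop) [DecidablePred P] :
    ((Finset.Ico L N).filter P).card
      = ((Finset.range (N - L)).filter fun i => P (i + L)).card := by
  classical
  refine Finset.card_bij' (fun i _ => i - L) (fun i _ => i + L) ?_ ?_ ?_ ?_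
  · intro a ha
    simp only [Finset.mem_filter, Finset.mem_Ico] at ha
    simp only [Finset.mem_filter, Finset.mem_range]
    constructor
    · omega
    · have : a - L + L = a := by omega
      rw [this]; exact ha.2
  · intro a ha
    simp only [Finset.mem_filter, Finset.mem_range] at ha
    simp only [Finset.mem_filter, Finset.mem_Ico]
    exact ⟨by omega, ha.2⟩
  · intro a ha
    simp only [Finset.mem_filter, Finset.mem_Ico] at ha
    omega
  · intro a _
    omega

theorem filter_split3 (P : ℕ → Prop) [DecidablePred P] (L N : ℕ) (h1 : 1 ≤ L) (h2 : L ≤ N) :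
    ((Finset.range N).filter P).card
      = ((Finset.range (L-1)).filter P).card + (if P (L-1) then 1 else 0)
        + ((Finset.Ico L N).filter P).card := by
  classical
  have d1 : Disjoint ((Finset.Ico (L-1) L).filter P)
      ((Finset.Ico L N).filter P) :=
    Finset.disjoint_filter_filter (Finset.Ico_disjoint_Ico_consecutive _ _ _)
  have d2 : Disjoint ((Finset.Ico 0 (L-1)).filter P)
      (((Finset.Ico (L-1) L).filter P) ∪ ((Finset.Ico L N).filter P)) := by
    refine Finset.disjoint_left.2 ?_
    intro a ha hb
    simp only [Finset.mem_filter, Finset.mem_Ico, Finset.mem_union] at ha hb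
    omega
  rw [Finset.range_eq_Ico]
  rw [← Finset.Ico_union_Ico_eq_Ico (Nat.zero_le (L-1)) (show L - 1 ≤ N by omega)]
  rw [← Finset.Ico_union_Ico_eq_Ico (show L - 1 ≤ L by omega) h2]
  rw [Finset.filter_union, Finset.filter_union,
    Finset.card_union_of_disjoint d2, Finset.card_union_of_disjoint d1]
  have e1 : Finset.Ico (L-1) L = {L-1} := by
    have : L = (L-1) + 1 := by omega
    rw [this]
    simp
  rw [e1, Finset.filter_singleton, ← Finset.range_eq_Ico]
  split <;> simp <;> omega
end Helpers

theorem sup_eq_of {S : Finset ℕ} {t : ℕ} (ht : t ∈ S) (hmax : ∀ b ∈ S, b ≤ t) :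
    S.sup id = t :=
  le_antisymm (Finset.sup_le hmax) (Finset.le_sup (f := id) ht)

/-- number of ascents -/
noncomputable def ups (n : ℕ) (w : ℕ → ℕ) : ℕ :=
  ((Finset.range (n-1)).filter fun i => w i < w (i+1)).card

theorem ups_le (n : ℕ) (w : ℕ → ℕ) : ups n w ≤ n - 1 := by
  calc ((Finset.range (n-1)).filter fun i => w i < w (i+1)).card
      ≤ (Finset.range (n-1)).card := Finset.card_filter_le _ _
    _ = n - 1 := Finset.card_range _

theorem PhiF_main : ∀ n, 1 ≤ n → ∀ w, w ∈ FlatCat n →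
    PhiF n w ∈ FlatCat n ∧ ups n (PhiF n w) = (n-1) - ups n w ∧
      PhiF n (PhiF n w) = w := by
  intro n
  induction n using Nat.strong_induction_on with
  | _ n ih =>
  intro hn w hwmem
  obtain ⟨hcat, hflat⟩ := hwmem
  by_cases hL : n ≤ runLen n w
  · -- single run case
    have hdef := PhiF_single n w hn hL
    have widx := cat_le_idx hcat
    have pw : ∀ i, i < n → PhiF n w i = i - w i := by
      intro i hi; rw [hdef]; exact if_pos hi
    have pw' : ∀ i, n ≤ i → PhiF n w i = 0 := by
      intro i hi; rw [hdef]; exact if_neg (by omega)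
    have hstep : ∀ i, i + 1 < n →
        (PhiF n w (i+1) = PhiF n w i ∨ PhiF n w (i+1) = PhiF n w i + 1) := by
      intro i hi
      have r := run_step hcat hn i (by omega)
      have := widx i (by omega)
      rw [pw i (by omega), pw (i+1) hi]
      omega
    have hmono : ∀ j, 1 ≤ j → j < n → PhiF n w (j-1) ≤ PhiF n w j := by
      intro j h1 h2
      have := hstep (j-1) (by omega)
      have e : j - 1 + 1 = j := by omega
      rw [e] at this
      omega
    have hw0 : PhiF n w 0 = 0 := by
      rw [pw 0 (by omega), hcat.1]
    have hcat' : IsCatalanWord n (PhiF n w) := by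
      refine ⟨hw0, fun i hi => ?_, pw'⟩
      have := hstep i hi
      omega
    have hflat' : IsFlattened n (PhiF n w) := by
      intro i j hi hj hij
      rcases Nat.eq_zero_or_pos i with h0 | h0
      · subst h0; rw [hw0]; exact Nat.zero_le _
      · exfalso
        have hd := hi.2.resolve_left (by omega)
        exact absurd (hmono i h0 hi.1) (by omega)
    refine ⟨⟨hcat', hflat'⟩, ?_, ?_⟩
    · -- ups
      have hcongr : ∀ i ∈ Finset.range (n-1),
          (PhiF n w i < PhiF n w (i+1)) ↔ ¬ (w i < w (i+1)) := by
        intro i hi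
        simp only [Finset.mem_range] at hi
        have r := run_step hcat hn i (by omega)
        have := widx i (by omega)
        rw [pw i (by omega), pw (i+1) (by omega)]
        omega
      have key := Finset.card_filter_add_card_filter_not
        (s := Finset.range (n-1)) (p := fun i => w i < w (i+1))
      unfold ups
      rw [Finset.filter_congr hcongr]
      rw [Finset.card_range] at key
      omega
    · -- involution
      have hrl : runLen n (PhiF n w) = n := runLen_eq_full hn hmono
      rw [PhiF_single n (PhiF n w) hn (by omega)]
      funext i
      by_cases hi : i < n
      · rw [if_pos hi, pw i hi]
        have := widx i hi
        omega
      · rw [if_neg hi]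
        exact (hcat.2.2 i (by omega)).symm
  · -- block case
    push_neg at hL
    obtain ⟨hs1, hs2, hs3⟩ := sPos_spec hcat hn hL
    obtain ⟨hq1, hq2⟩ := sPos_succ hcat hn hL
    have hchar := sPos_lt_char hcat hn hL
    obtain ⟨hds, hsum⟩ := sPos_bounds hcat hn hL
    have hdesc := desc_at hn hL
    have hged := suffix_ge hcat hflat hL
    have hvmem := sfx_mem hcat hflat hn hL
    have hrlpos := runLen_pos n w
    have hui : w (runLen n w - 1) ≤ runLen n w - 1 := cat_le_idx hcat _ (by omega)
    obtain ⟨hv'mem, hv'ups, hv'inv⟩ :=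
      ih (n - runLen n w) (by omega) (by omega) (sfx n w) hvmem
    have hdef := PhiF_block n w hn hL
    have widx := cat_le_idx hcat
    have pw1 : ∀ i, i < runLen n w →
        PhiF n w i = i - w i + (if sPos n w < i then 1 else 0) := by
      intro i hi; rw [hdef]; exact if_pos hi
    have pw2 : ∀ i, runLen n w ≤ i → i < n → PhiF n w i =
        PhiF (n - runLen n w) (sfx n w) (i - runLen n w)
          + (sPos n w - w (runLen n w)) := by
      intro i h1 h2
      rw [hdef]
      dsimp only
      rw [if_neg (by omega), if_pos h2]
    have pw3 : ∀ i, n ≤ i → PhiF n w i = 0 := fun i hi => PhiF_norm n w i hi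
    have vval : ∀ i, i < n - runLen n w →
        sfx n w i = w (i + runLen n w) - w (runLen n w) := by
      intro i hi; unfold sfx; exact if_pos hi
    have v'0 : PhiF (n - runLen n w) (sfx n w) 0 = 0 := hv'mem.1.1
    have v'norm : ∀ i, n - runLen n w ≤ i → PhiF (n - runLen n w) (sfx n w) i = 0 :=
      fun i hi => PhiF_norm _ _ i hi
    -- block steps of PhiF n w
    have wstep' : ∀ i, i + 1 < runLen n w →
        (PhiF n w (i+1) = PhiF n w i ∨ PhiF n w (i+1) = PhiF n w i + 1) := by
      intro i hilt
      have hwid := widx i (by omega)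
      have r := run_step hcat hn i (by omega)
      rw [pw1 i (by omega), pw1 (i+1) (by omega)]
      by_cases his : i = sPos n w
      · subst his; split_ifs <;> omega
      · split_ifs <;> omega
    have wmono' : ∀ j, 1 ≤ j → j < runLen n w → PhiF n w (j-1) ≤ PhiF n w j := by
      intro j h1 h2
      have := wstep' (j-1) (by omega)
      have e : j - 1 + 1 = j := by omega
      rw [e] at this
      omega
    have hw'0 : PhiF n w 0 = 0 := by
      rw [pw1 0 (by omega), hcat.1]
      simp
    have hwL : PhiF n w (runLen n w) = sPos n w - w (runLen n w) := by
      rw [pw2 (runLen n w) le_rfl hL, Nat.sub_self, v'0]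
      omega
    have hwL1 : PhiF n w (runLen n w - 1) = runLen n w - w (runLen n w - 1) := by
      rw [pw1 (runLen n w - 1) (by omega), if_pos (by omega)]
      omega
    have hjdesc : PhiF n w (runLen n w) < PhiF n w (runLen n w - 1) := by
      rw [hwL, hwL1]
      omega
    have hrunL : runLen n (PhiF n w) = runLen n w :=
      runLen_eq_desc hrlpos hL hjdesc wmono'
    -- Catalan
    have hcat' : IsCatalanWord n (PhiF n w) := by
      refine ⟨hw'0, fun i hi => ?_, pw3⟩
      by_cases h1 : i + 1 < runLen n w
      · have := wstep' i h1
        omega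
      · by_cases h2 : i + 1 = runLen n w
        · rw [h2, show i = runLen n w - 1 by omega]
          omega
        · have h3 : runLen n w ≤ i := by omega
          rw [pw2 i h3 (by omega), pw2 (i+1) (by omega) hi]
          have := hv'mem.1.2.1 (i - runLen n w) (by omega)
          rw [show i + 1 - runLen n w = (i - runLen n w) + 1 by omega]
          omega
    -- Flattened
    have hrs : ∀ i, runLen n w < i → i < n →
        (PhiF n w i < PhiF n w (i-1) ↔
          PhiF (n - runLen n w) (sfx n w) (i - runLen n w)
            < PhiF (n - runLen n w) (sfx n w) (i - runLen n w - 1)) := by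
      intro i h1 h2
      rw [pw2 i (by omega) h2, pw2 (i-1) (by omega) (by omega)]
      rw [show i - 1 - runLen n w = i - runLen n w - 1 by omega]
      omega
    have hflat' : IsFlattened n (PhiF n w) := by
      intro i j hi hj hij
      by_cases hi0 : i = 0
      · subst hi0; rw [hw'0]; exact Nat.zero_le _
      · have hidesc : PhiF n w i < PhiF n w (i-1) := hi.2.resolve_left hi0
        have hiL : runLen n w ≤ i := by
          by_contra hc
          exact absurd (wmono' i (by omega) (by omega)) (by omega)
        have hj0 : j ≠ 0 := by omega
        have hjdesc2 : PhiF n w j < PhiF n w (j-1) := hj.2.resolve_left hj0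
        have hjL : runLen n w ≤ j := by
          by_contra hc
          exact absurd (wmono' j (by omega) (by omega)) (by omega)
        by_cases hiL2 : i = runLen n w
        · subst hiL2
          have hin := hi.1
          have hjn := hj.1
          rcases Nat.eq_or_lt_of_le hij with h | h
          · exact le_of_eq (congrArg (PhiF n w) h)
          · rw [hwL, pw2 j (by omega) hj.1]
            omega
        · have hjL2 : runLen n w < j := by omega
          have hin := hi.1
          have hjn := hj.1
          have ri : IsRunStart (n - runLen n w) (PhiF (n - runLen n w) (sfx n w))
              (i - runLen n w) :=
            ⟨by omega, Or.inr ((hrs i (by omega) hi.1).1 hidesc)⟩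
          have rj : IsRunStart (n - runLen n w) (PhiF (n - runLen n w) (sfx n w))
              (j - runLen n w) :=
            ⟨by omega, Or.inr ((hrs j (by omega) hj.1).1 hjdesc2)⟩
          have := hv'mem.2 _ _ ri rj (by omega)
          rw [pw2 i (by omega) hi.1, pw2 j (by omega) hj.1]
          omega
    refine ⟨⟨hcat', hflat'⟩, ?_, ?_⟩
    · -- ups count
      have split_w := filter_split3 (fun i => w i < w (i+1)) (runLen n w) (n-1)
        hrlpos (by omega)
      have split_w' := filter_split3 (fun i => PhiF n w i < PhiF n w (i+1))
        (runLen n w) (n-1) hrlpos (by omega)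
      have cnt_w : w (runLen n w - 1)
          = ((Finset.range (runLen n w - 1)).filter fun i => w i < w (i+1)).card :=
        run_count hcat hn _ (by omega)
      have cnt_w' : PhiF n w (runLen n w - 1)
          = ((Finset.range (runLen n w - 1)).filter
              fun i => PhiF n w i < PhiF n w (i+1)).card :=
        run_count hcat' hn _ (by omega)
      have mid_w : ¬ (w (runLen n w - 1) < w (runLen n w - 1 + 1)) := by
        rw [show runLen n w - 1 + 1 = runLen n w by omega]
        omega
      have mid_w' : ¬ (PhiF n w (runLen n w - 1) < PhiF n w (runLen n w - 1 + 1)) := by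
        rw [show runLen n w - 1 + 1 = runLen n w by omega]
        omega
      have ico_w : ((Finset.Ico (runLen n w) (n-1)).filter fun i => w i < w (i+1)).card
          = ups (n - runLen n w) (sfx n w) := by
        rw [card_shift]
        unfold ups
        rw [show n - 1 - runLen n w = (n - runLen n w) - 1 by omega]
        apply Finset.card_nbij' id id <;> intro a ha <;>
          simp only [Finset.mem_coe, Finset.mem_filter, Finset.mem_range, id] at * <;>
          try exact trivial
        · obtain ⟨h1, h2⟩ := ha
          refine ⟨h1, ?_⟩
          rw [vval a (by omega), vval (a+1) (by omega)]
          have g1 := hged (a + runLen n w) (by omega) (by omega)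
          have g2 := hged (a + 1 + runLen n w) (by omega) (by omega)
          rw [show a + runLen n w + 1 = a + 1 + runLen n w by omega] at h2
          omega
        · obtain ⟨h1, h2⟩ := ha
          refine ⟨h1, ?_⟩
          rw [vval a (by omega), vval (a+1) (by omega)] at h2
          have g1 := hged (a + runLen n w) (by omega) (by omega)
          have g2 := hged (a + 1 + runLen n w) (by omega) (by omega)
          rw [show a + runLen n w + 1 = a + 1 + runLen n w by omega]
          omega
      have ico_w' : ((Finset.Ico (runLen n w) (n-1)).filter
            fun i => PhiF n w i < PhiF n w (i+1)).card
          = ups (n - runLen n w) (PhiF (n - runLen n w) (sfx n w)) := by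
        rw [card_shift]
        unfold ups
        rw [show n - 1 - runLen n w = (n - runLen n w) - 1 by omega]
        apply Finset.card_nbij' id id <;> intro a ha <;>
          simp only [Finset.mem_coe, Finset.mem_filter, Finset.mem_range, id] at * <;>
          try exact trivial
        · obtain ⟨h1, h2⟩ := ha
          refine ⟨h1, ?_⟩
          rw [pw2 (a + runLen n w) (by omega) (by omega),
            pw2 (a + runLen n w + 1) (by omega) (by omega)] at h2
          rw [show a + runLen n w - runLen n w = a by omega] at h2
          rw [show a + runLen n w + 1 - runLen n w = a + 1 by omega] at h2
          omega
        · obtain ⟨h1, h2⟩ := ha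
          refine ⟨h1, ?_⟩
          rw [pw2 (a + runLen n w) (by omega) (by omega),
            pw2 (a + runLen n w + 1) (by omega) (by omega)]
          rw [show a + runLen n w - runLen n w = a by omega]
          rw [show a + runLen n w + 1 - runLen n w = a + 1 by omega]
          omega
      have hule := ups_le (n - runLen n w) (sfx n w)
      unfold ups at *
      rw [if_neg mid_w] at split_w
      rw [if_neg mid_w'] at split_w'
      rw [ico_w] at split_w
      rw [ico_w'] at split_w'
      rw [hwL1] at cnt_w'
      omega
    · -- involution
      have hblock2 := PhiF_block n (PhiF n w) hn (by omega)
      have hsPos' : sPos n (PhiF n w) = sPos n w := by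
        have hws : PhiF n w (sPos n w) = sPos n w - w (runLen n w) := by
          rw [pw1 (sPos n w) (by omega), if_neg (by omega)]
          omega
        have hws1 : PhiF n w (sPos n w + 1) = sPos n w - w (runLen n w) + 1 := by
          rw [pw1 (sPos n w + 1) (by omega), if_pos (by omega), hq2]
          omega
        have e0 : sPos n (PhiF n w) = ((Finset.range (runLen n (PhiF n w))).filter
            (fun i => PhiF n w i = PhiF n w (runLen n (PhiF n w)))).sup id := rfl
        rw [e0, hrunL, hwL]
        apply sup_eq_of
        · simp only [Finset.mem_filter, Finset.mem_range]
          exact ⟨by omega, hws⟩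
        · intro b hb
          simp only [Finset.mem_filter, Finset.mem_range] at hb
          by_contra hc
          push_neg at hc
          have hmon := run_mono (n := n) (w := PhiF n w) (sPos n w + 1) b
            (by omega) (by rw [hrunL]; exact hb.1)
          rw [hws1] at hmon
          have := hb.2
          omega
      have hsfxval : ∀ j, sfx n (PhiF n w) j
          = if j < n - runLen n w then PhiF n w (j + runLen n w) - PhiF n w (runLen n w)
            else 0 := by
        intro j
        unfold sfx
        rw [hrunL]
      have hsfx' : sfx n (PhiF n w) = PhiF (n - runLen n w) (sfx n w) := by
        funext j
        rw [hsfxval j]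
        by_cases hj : j < n - runLen n w
        · rw [if_pos hj, hwL, pw2 (j + runLen n w) (by omega) (by omega),
            show j + runLen n w - runLen n w = j by omega]
          omega
        · rw [if_neg hj, v'norm j (by omega)]
      rw [hblock2, hsPos', hrunL, hsfx', hwL]
      funext i
      by_cases hi1 : i < runLen n w
      · rw [if_pos hi1, pw1 i hi1]
        have := widx i (by omega)
        by_cases his : sPos n w < i
        · have := (hchar i hi1).1 his
          rw [if_pos his]
          omega
        · rw [if_neg his]
          omega
      · rw [if_neg hi1]
        by_cases hi2 : i < n
        · rw [if_pos hi2, hv'inv]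
          rw [vval (i - runLen n w) (by omega)]
          rw [show i - runLen n w + runLen n w = i by omega]
          have := hged i (by omega) hi2
          omega
        · rw [if_neg hi2]
          exact (hcat.2.2 i (by omega)).symm

theorem wrunsDesc_eq (n : ℕ) (w : ℕ → ℕ) : wrunsDesc n w = 1 + ups n w := by
  unfold wrunsDesc ups
  congr 1
  have : {i : ℕ | i + 1 < n ∧ w i < w (i + 1)}
      = ↑((Finset.range (n-1)).filter fun i => w i < w (i+1)) := by
    ext i
    simp only [Set.mem_setOf_eq, Finset.coe_filter, Finset.mem_range]
    constructor
    · rintro ⟨h1, h2⟩; exact ⟨by omega, h2⟩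
    · rintro ⟨h1, h2⟩; exact ⟨by omega, h2⟩
  rw [this, Set.ncard_coe_finset]

theorem runsAsc_eq (n : ℕ) (w : ℕ → ℕ) : runsAsc n w = 1 + ((n - 1) - ups n w) := by
  unfold runsAsc ups
  congr 1
  have h1 : {i : ℕ | i + 1 < n ∧ w (i + 1) ≤ w i}
      = ↑((Finset.range (n-1)).filter fun i => ¬ (w i < w (i+1))) := by
    ext i
    simp only [Set.mem_setOf_eq, Finset.coe_filter, Finset.mem_range]
    constructor
    · rintro ⟨h1, h2⟩; exact ⟨by omega, by omega⟩
    · rintro ⟨h1, h2⟩; exact ⟨by omega, by omega⟩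
  rw [h1, Set.ncard_coe_finset]
  have key := Finset.card_filter_add_card_filter_not
    (s := Finset.range (n-1)) (p := fun i => w i < w (i+1))
  rw [Finset.card_range] at key
  have := ups_le n w
  unfold ups at this
  omega

/-- For all `n, k ≥ 1`, flattened Catalan words of length `n` with exactly `k`
runs of weak descents are equinumerous with those with exactly `k` runs of
ascents. -/
theorem flatCat_wrunsDesc_eq_runsAsc (n k : ℕ) (hn : 1 ≤ n) (hk : 1 ≤ k) :
    {w ∈ FlatCat n | wrunsDesc n w = k}.ncard =
      {w ∈ FlatCat n | runsAsc n w = k}.ncard := by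
  by_cases hkn : k ≤ n
  · have himg : PhiF n '' {w ∈ FlatCat n | wrunsDesc n w = k}
        = {w ∈ FlatCat n | runsAsc n w = k} := by
      ext y
      simp only [Set.mem_image, Set.mem_setOf_eq]
      constructor
      · rintro ⟨x, ⟨hxF, hxk⟩, rfl⟩
        obtain ⟨h1, h2, h3⟩ := PhiF_main n hn x hxF
        refine ⟨h1, ?_⟩
        rw [wrunsDesc_eq] at hxk
        rw [runsAsc_eq, h2]
        have := ups_le n x
        omega
      · rintro ⟨hyF, hyk⟩
        obtain ⟨h1, h2, h3⟩ := PhiF_main n hn y hyF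
        refine ⟨PhiF n y, ⟨h1, ?_⟩, h3⟩
        rw [runsAsc_eq] at hyk
        rw [wrunsDesc_eq, h2]
        have := ups_le n y
        omega
    have hinj : Set.InjOn (PhiF n) {w ∈ FlatCat n | wrunsDesc n w = k} := by
      intro a ha b hb heq
      obtain ⟨_, _, h3a⟩ := PhiF_main n hn a ha.1
      obtain ⟨_, _, h3b⟩ := PhiF_main n hn b hb.1
      calc a = PhiF n (PhiF n a) := h3a.symm
        _ = PhiF n (PhiF n b) := by rw [heq]
        _ = b := h3b
    rw [← himg, Set.ncard_image_of_injOn hinj]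
  · have e1 : {w ∈ FlatCat n | wrunsDesc n w = k} = ∅ := by
      rw [Set.eq_empty_iff_forall_notMem]
      rintro w ⟨hm, he⟩
      rw [wrunsDesc_eq] at he
      have := ups_le n w
      omega
    have e2 : {w ∈ FlatCat n | runsAsc n w = k} = ∅ := by
      rw [Set.eq_empty_iff_forall_notMem]
      rintro w ⟨hm, he⟩
      rw [runsAsc_eq] at he
      omega
    rw [e1, e2]
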